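/- Let σ > 0 and σ_D > 0 be real numbers with σ_D² ≠ σ² + 1, and set s = σ²/(σ² + 1). Let G = gaussianReal 0 (s + s²·σ_D²) be the limit of the average posterior distribution for the Gaussian simulator p(x|θ) = N(θ, 1), Gaussian prior N(0, σ²), and data distribution N(0, σ_D²). Then the pushforward of G through the simulator differs from the data distribution: G.bind (fun θ => gaussianReal θ 1) ≠ gaussianReal 0 σ_D²; i.e., the average posterior is not a valid source distribution. -/

import Mathlib

open MeasureTheory ProbabilityTheory Real
open scoped NNReal ENNReal

lemma gauss_pointwise (m : ℝ) {v : ℝ≥0} (hv : 0 < v) {a : ℝ} (ha : 0 < a) (x : ℝ) :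
    gaussianPDFReal m v x * Real.exp (-(a * x ^ 2))
      = (Real.sqrt (2 * π * v))⁻¹ * Real.exp (-(a * m ^ 2) / (1 + 2 * a * v))
        * Real.exp (-((1 + 2 * a * (v:ℝ)) / (2 * v)) * (x - m / (1 + 2 * a * v)) ^ 2) := by
  have hv' : (0:ℝ) < v := hv
  have h1 : (0:ℝ) < 1 + 2 * a * v := by positivity
  rw [gaussianPDFReal]
  rw [mul_assoc, ← Real.exp_add]
  rw [show (√(2 * π * (v:ℝ)))⁻¹ * Real.exp (-(a * m ^ 2) / (1 + 2 * a * v)) * Real.exp (-((1 + 2 * a * (v:ℝ)) / (2 * v)) * (x - m / (1 + 2 * a * v)) ^ 2) = (√(2 * π * (v:ℝ)))⁻¹ * Real.exp (-(a * m ^ 2) / (1 + 2 * a * (v:ℝ)) + -((1 + 2 * a * (v:ℝ)) / (2 * v)) * (x - m / (1 + 2 * a * v)) ^ 2) from by rw [Real.exp_add]; ring]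
  congr 1
  congr 1
  field_simp
  ring

lemma gauss_integral (m : ℝ) {v : ℝ≥0} (hv : 0 < v) {a : ℝ} (ha : 0 < a) :
    ∫⁻ x, ENNReal.ofReal (Real.exp (-(a * x ^ 2))) ∂(gaussianReal m v)
      = ENNReal.ofReal (Real.exp (-(a * m ^ 2) / (1 + 2 * a * v)) / Real.sqrt (1 + 2 * a * v)) := by
  have hv' : (0:ℝ) < v := hv
  have h1 : (0:ℝ) < 1 + 2 * a * v := by positivity
  have hb : (0:ℝ) < (1 + 2 * a * v) / (2 * v) := by positivity
  rw [gaussianReal_of_var_ne_zero m hv.ne',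
    lintegral_withDensity_eq_lintegral_mul _ (measurable_gaussianPDF m v)
      (by measurability)]
  have heq : ∀ x : ℝ, (gaussianPDF m v * fun x => ENNReal.ofReal (Real.exp (-(a * x ^ 2)))) x
      = ENNReal.ofReal (gaussianPDFReal m v x * Real.exp (-(a * x ^ 2))) := by
    intro x
    simp only [Pi.mul_apply, gaussianPDF]
    rw [← ENNReal.ofReal_mul (gaussianPDFReal_nonneg m v x)]
  simp_rw [heq, gauss_pointwise m hv ha]
  have hint : Integrable (fun x : ℝ => (Real.sqrt (2 * π * v))⁻¹ * Real.exp (-(a * m ^ 2) / (1 + 2 * a * v)) * Real.exp (-((1 + 2 * a * (v:ℝ)) / (2 * v)) * (x - m / (1 + 2 * a * v)) ^ 2)) := by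
    exact ((integrable_exp_neg_mul_sq hb).comp_sub_right _).const_mul _
  rw [← ofReal_integral_eq_lintegral_ofReal hint (Filter.Eventually.of_forall fun x => by positivity)]
  congr 1
  rw [integral_const_mul]
  have : (∫ x : ℝ, Real.exp (-((1 + 2 * a * (v:ℝ)) / (2 * v)) * (x - m / (1 + 2 * a * v)) ^ 2))
      = √(π / ((1 + 2 * a * (v:ℝ)) / (2 * v))) := by
    rw [← integral_gaussian]
    exact integral_sub_right_eq_self (fun x => Real.exp (-((1 + 2 * a * (v:ℝ)) / (2 * v)) * x ^ 2)) _
  rw [this, show π / ((1 + 2 * a * (v:ℝ)) / (2 * v)) = (2 * π * v) / (1 + 2 * a * v) from by field_simp,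
    Real.sqrt_div (by positivity) _]
  have h2 : Real.sqrt (2 * π * v) ≠ 0 := by positivity
  field_simp
lemma measurable_gauss_kernel : Measurable (fun θ : ℝ => gaussianReal θ 1) := by
  refine Measure.measurable_of_measurable_coe _ (fun t ht => ?_)
  simp_rw [gaussianReal_apply _ one_ne_zero t]
  have hj : Measurable (fun p : ℝ × ℝ => gaussianPDF p.1 1 p.2) := by
    apply Measurable.ennreal_ofReal
    unfold gaussianPDFReal
    fun_prop
  simp_rw [← lintegral_indicator ht]
  have : ∀ θ : ℝ, (t.indicator (gaussianPDF θ 1)) = fun x => Set.indicator {p : ℝ × ℝ | p.2 ∈ t} (fun p => gaussianPDF p.1 1 p.2) (θ, x) := by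
    intro θ; funext x
    by_cases hx : x ∈ t <;> simp [Set.indicator, hx]
  simp_rw [this]
  exact Measurable.lintegral_prod_right' (hj.indicator (measurable_snd ht))

set_option maxHeartbeats 1000000 in
/-- The limit of the average posterior, `G = N(0, s + s²σ_D²)` with `s = σ²/(σ²+1)`,
is not a valid source distribution for the Gaussian simulator `p(x|θ) = N(θ,1)` and data
distribution `N(0, σ_D²)` whenever `σ_D² ≠ σ² + 1`. -/
theorem average_posterior_gaussian_not_source
    (σ σ_D : ℝ≥0) (hσ : 0 < σ) (hσD : 0 < σ_D)
    (hne : σ_D ^ 2 ≠ σ ^ 2 + 1)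
    (s : ℝ≥0) (hs : s = σ ^ 2 / (σ ^ 2 + 1)) :
    (gaussianReal 0 (s + s ^ 2 * σ_D ^ 2)).bind (fun θ => gaussianReal θ 1)
      ≠ gaussianReal 0 (σ_D ^ 2) := by
  intro h
  have hσ' : (0:ℝ) < σ := hσ
  have hσD' : (0:ℝ) < σ_D := hσD
  have hsR : (s:ℝ) = (σ:ℝ)^2 / ((σ:ℝ)^2 + 1) := by
    rw [hs]; push_cast [NNReal.coe_div]; ring_nf
  have hs0 : (0:ℝ) < s := by rw [hsR]; positivity
  have hv0 : 0 < s + s ^ 2 * σ_D ^ 2 := by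
    have : (0:ℝ) < ((s + s ^ 2 * σ_D ^ 2 : ℝ≥0) : ℝ) := by push_cast; positivity
    exact_mod_cast this
  have hD0 : 0 < σ_D ^ 2 := pow_pos hσD 2
  have hmf : Measurable fun x : ℝ => ENNReal.ofReal (Real.exp (-((1:ℝ)/2 * x ^ 2))) := by
    measurability
  have hL := congrArg (fun μ : Measure ℝ =>
    ∫⁻ x, ENNReal.ofReal (Real.exp (-((1:ℝ)/2 * x ^ 2))) ∂μ) h
  rw [Measure.lintegral_bind measurable_gauss_kernel.aemeasurable hmf.aemeasurable,
    gauss_integral 0 hD0 (by norm_num : (0:ℝ) < 1/2)] at hL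
  have hinner : ∀ θ : ℝ, ∫⁻ x, ENNReal.ofReal (Real.exp (-((1:ℝ)/2 * x ^ 2))) ∂gaussianReal θ 1
      = ENNReal.ofReal ((Real.sqrt 2)⁻¹) * ENNReal.ofReal (Real.exp (-((1:ℝ)/4 * θ ^ 2))) := by
    intro θ
    rw [gauss_integral θ one_pos (by norm_num : (0:ℝ) < 1/2),
      ← ENNReal.ofReal_mul (by positivity)]
    congr 1
    have h2 : (1:ℝ) + 2 * (1/2) * ((1:ℝ≥0):ℝ) = 2 := by push_cast; norm_num
    rw [h2, show -(1/2*θ^2)/(2:ℝ) = -((1:ℝ)/4*θ^2) from by ring]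
    rw [div_eq_mul_inv, mul_comm]
  simp_rw [hinner] at hL
  rw [lintegral_const_mul _ (by measurability),
    gauss_integral 0 hv0 (by norm_num : (0:ℝ) < 1/4),
    ← ENNReal.ofReal_mul (by positivity)] at hL
  rw [ENNReal.ofReal_eq_ofReal_iff (by positivity) (by positivity)] at hL
  -- now a real equation
  set vR : ℝ := ((s + s ^ 2 * σ_D ^ 2 : ℝ≥0) : ℝ) with hvR
  have hvR' : vR = (s:ℝ) + (s:ℝ)^2 * (σ_D:ℝ)^2 := by rw [hvR]; push_cast; ring
  have hvRpos : 0 < vR := by rw [hvR']; positivity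
  have key : (2:ℝ) + vR = 1 + (σ_D:ℝ)^2 := by
    norm_num at hL
    have h2 : Real.sqrt 2 * Real.sqrt (1 + 1/2 * vR) = Real.sqrt (2 + vR) := by
      rw [← Real.sqrt_mul (by norm_num)]
      congr 1; ring
    have hq : Real.sqrt (2 + vR) = Real.sqrt (1 + (σ_D:ℝ)^2) := by
      have hL' : (Real.sqrt 2 * Real.sqrt (1 + 1/2 * vR))⁻¹
          = (Real.sqrt (1 + (σ_D:ℝ)^2))⁻¹ := by
        rw [mul_inv, hL]
      rw [h2] at hL'
      exact inv_injective hL'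
    have h3 := congrArg (fun x : ℝ => x ^ 2) hq
    rwa [Real.sq_sqrt (by positivity : (0:ℝ) ≤ 2 + vR),
      Real.sq_sqrt (by positivity : (0:ℝ) ≤ 1 + (σ_D:ℝ)^2)] at h3
  -- algebra contradiction
  have hneR : (σ_D:ℝ)^2 ≠ (σ:ℝ)^2 + 1 := by
    intro hc; apply hne; apply NNReal.coe_injective; push_cast; exact hc
  apply hneR
  have heq : (s:ℝ) + (s:ℝ)^2 * (σ_D:ℝ)^2 + 1 = (σ_D:ℝ)^2 := by
    rw [← hvR']; linarith
  rw [hsR] at heq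
  have ha1 : (σ:ℝ)^2 + 1 ≠ 0 := by positivity
  field_simp at heq
  nlinarith [heq, sq_nonneg ((σ:ℝ)^2 + 1)]
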